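/- If λ_1, …, λ_n ∈ [0,1] sum to 1 and n ≥ 2, and ε_Mix, ε_CutMix, ε_o are defined with λ = max_i λ_i and strictly positive a = Δ²D_s/σ_s² and b = D_y/σ_y², then ε_Mix < ε_CutMix < ε_o strictly; equality ε_Mix = ε_CutMix = ε_o holds if and only if max_i λ_i = 1. -/
import Mathlib


open Finset

/-- For n ≥ 2 positive mixing ratios λ_i ∈ [0,1] summing to 1, with λ = max λ_i and
a, b, α > 0, the budgets satisfy ε_Mix < ε_CutMix < ε_o strictly, and
ε_Mix = ε_CutMix = ε_o holds if and only if max λ_i = 1. -/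
theorem strict_budget_ordering
    (n : ℕ) (hn : 2 ≤ n) (lam : Fin n → ℝ)
    (hlam : ∀ i, lam i ∈ Set.Icc (0 : ℝ) 1) (hpos : ∀ i, 0 < lam i)
    (hsum : ∑ i, lam i = 1)
    (lmax : ℝ) (hmax : IsGreatest (Set.range lam) lmax)
    (a b α : ℝ) (ha : 0 < a) (hb : 0 < b) (hα : 0 < α) :
    (α * lmax ^ 2 / 2 * (a + b) < α * lmax / 2 * (a + lmax * b) ∧
      α * lmax / 2 * (a + lmax * b) < α / 2 * (a + b)) ∧
    ((α * lmax ^ 2 / 2 * (a + b) = α * lmax / 2 * (a + lmax * b) ∧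
      α * lmax / 2 * (a + lmax * b) = α / 2 * (a + b)) ↔ lmax = 1) := by
  obtain ⟨⟨k, hk⟩, hub⟩ := hmax
  have hkpos : 0 < lmax := hk ▸ hpos k
  -- find another index
  have : ∃ j : Fin n, j ≠ k := by
    haveI : Nontrivial (Fin n) := Fin.nontrivial_iff_two_le.mpr hn
    exact exists_ne k
  obtain ⟨j, hjk⟩ := this
  have hsub : ({k, j} : Finset (Fin n)) ⊆ univ := subset_univ _
  have hsum2 : lam k + lam j ≤ 1 := by
    have := Finset.sum_le_sum_of_subset_of_nonneg hsub
      (fun i _ _ => (hpos i).le)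
    rw [Finset.sum_pair (Ne.symm hjk)] at this
    linarith [hsum ▸ this]
  have hlt1 : lmax < 1 := by
    have := hpos j
    linarith [hk ▸ hsum2]
  constructor
  · constructor
    · nlinarith [mul_pos hα hkpos, mul_pos ha (sub_pos.mpr hlt1)]
    · nlinarith [mul_pos (mul_pos hα hb) (mul_pos hkpos (sub_pos.mpr hlt1)),
        mul_pos (mul_pos hα ha) (sub_pos.mpr hlt1)]
  · constructor
    · rintro ⟨h1, -⟩
      exfalso
      nlinarith [mul_pos hα hkpos, mul_pos ha (sub_pos.mpr hlt1)]
    · intro h; exfalso; linarith
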